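/- arXiv:1704.01319 — 5 statements merged into one kernel-verified Lean document; each statement's English description precedes it below -/
import Mathlib

section
/- For every homogeneous element a of R and every α in Λ, one has ψ_α(d(a)) - d(ψ_α(a)) - Σ_{β in Λ} (-1)^{|ψ_β(a)|} ψ_β(a) ψ_α(d(x_β)) = 0 in R, where |ψ_β(a)| = |a| - |x_β| and the sum has only finitely many nonzero terms. -/
noncomputable section

open scoped DirectSum

/-- The sign `(-1)^m`, as an integer, for `m : ℤ`. -/
def sgn (m : ℤ) : ℤ := (Int.negOnePow m : ℤ)

/-- A differential graded Poisson algebra structure on a `ℤ`-graded `k`-algebra `A`,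
whose grading is given by `𝒜`. -/
structure DGPoissonAlgebra (k : Type) [Field k] (A : Type) [Ring A] [Algebra k A]
    (𝒜 : ℤ → Submodule k A) : Type where
  /-- the Poisson bracket -/
  br : A →ₗ[k] A →ₗ[k] A
  /-- the differential -/
  d : A →ₗ[k] A
  br_mem : ∀ ⦃i j : ℤ⦄ ⦃a b : A⦄, a ∈ 𝒜 i → b ∈ 𝒜 j → br a b ∈ 𝒜 (i + j)
  d_mem : ∀ ⦃i : ℤ⦄ ⦃a : A⦄, a ∈ 𝒜 i → d a ∈ 𝒜 (i + 1)
  antisymm : ∀ ⦃i j : ℤ⦄ ⦃a b : A⦄, a ∈ 𝒜 i → b ∈ 𝒜 j →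
    br a b = -(sgn (i * j) • br b a)
  jacobi : ∀ ⦃i j l : ℤ⦄ ⦃a b c : A⦄, a ∈ 𝒜 i → b ∈ 𝒜 j → c ∈ 𝒜 l →
    br a (br b c) = br (br a b) c + sgn (i * j) • br b (br a c)
  gcomm : ∀ ⦃i j : ℤ⦄ ⦃a b : A⦄, a ∈ 𝒜 i → b ∈ 𝒜 j → a * b = sgn (i * j) • (b * a)
  leibniz : ∀ ⦃i j l : ℤ⦄ ⦃a b c : A⦄, a ∈ 𝒜 i → b ∈ 𝒜 j → c ∈ 𝒜 l →
    br a (b * c) = br a b * c + sgn (i * j) • (b * br a c)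
  d_sq : ∀ a : A, d (d a) = 0
  d_br : ∀ ⦃i j : ℤ⦄ ⦃a b : A⦄, a ∈ 𝒜 i → b ∈ 𝒜 j →
    d (br a b) = br (d a) b + sgn i • br a (d b)
  d_mul : ∀ ⦃i j : ℤ⦄ ⦃a b : A⦄, a ∈ 𝒜 i → b ∈ 𝒜 j →
    d (a * b) = d a * b + sgn i • (a * d b)

/-- A differential graded algebra structure (i.e. a differential) on a `ℤ`-graded
`k`-algebra `B` with grading `ℬ`. -/
structure DGAlgebra (k : Type) [Field k] (B : Type) [Ring B] [Algebra k B]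
    (ℬ : ℤ → Submodule k B) : Type where
  /-- the differential -/
  d : B →ₗ[k] B
  d_mem : ∀ ⦃i : ℤ⦄ ⦃b : B⦄, b ∈ ℬ i → d b ∈ ℬ (i + 1)
  d_sq : ∀ b : B, d (d b) = 0
  d_mul : ∀ ⦃i j : ℤ⦄ ⦃a b : B⦄, a ∈ ℬ i → b ∈ ℬ j →
    d (a * b) = d a * b + sgn i • (a * d b)

/-- `f` is a DG algebra map: a degree-`0` algebra map commuting with the differentials. -/
structure IsDGAlgebraMap (k : Type) [Field k] {A B : Type} [Ring A] [Algebra k A]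
    [Ring B] [Algebra k B] (𝒜 : ℤ → Submodule k A) (ℬ : ℤ → Submodule k B)
    (dA : A →ₗ[k] A) (dB : B →ₗ[k] B) (f : A →ₐ[k] B) : Prop where
  map_mem : ∀ ⦃i : ℤ⦄ ⦃a : A⦄, a ∈ 𝒜 i → f a ∈ ℬ i
  map_d : ∀ a : A, f (dA a) = dB (f a)

/-- The compatibility conditions satisfied by a pair `(f, g)` from a DG Poisson algebra
`A` to a DG algebra `B`: `f` is a DG algebra map, `g` is a degree-`0` `k`-linear map
commuting with the differentials which is a graded Lie algebra map into `B` with the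
graded commutator, and the two mixed identities hold. -/
def UEACompat (k : Type) [Field k] {A B : Type} [Ring A] [Algebra k A]
    [Ring B] [Algebra k B] (𝒜 : ℤ → Submodule k A) (ℬ : ℤ → Submodule k B)
    (P : DGPoissonAlgebra k A 𝒜) (dB : B →ₗ[k] B)
    (f : A →ₐ[k] B) (g : A →ₗ[k] B) : Prop :=
  IsDGAlgebraMap k 𝒜 ℬ P.d dB f ∧
  (∀ ⦃i : ℤ⦄ ⦃a : A⦄, a ∈ 𝒜 i → g a ∈ ℬ i) ∧
  (∀ a : A, g (P.d a) = dB (g a)) ∧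
  (∀ ⦃i j : ℤ⦄ ⦃a b : A⦄, a ∈ 𝒜 i → b ∈ 𝒜 j →
    g (P.br a b) = g a * g b - sgn (i * j) • (g b * g a)) ∧
  (∀ ⦃i j : ℤ⦄ ⦃a b : A⦄, a ∈ 𝒜 i → b ∈ 𝒜 j →
    f (P.br a b) = g a * f b - sgn (i * j) • (f b * g a)) ∧
  (∀ ⦃i j : ℤ⦄ ⦃a b : A⦄, a ∈ 𝒜 i → b ∈ 𝒜 j →
    g (a * b) = f a * g b + sgn (i * j) • (f b * g a))

/-- `(E, α, β)` is a universal enveloping algebra of the DG Poisson algebra `A`. -/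
def IsUEA (k : Type) [Field k] {A E : Type} [Ring A] [Algebra k A] [Ring E] [Algebra k E]
    (𝒜 : ℤ → Submodule k A) (ℰ : ℤ → Submodule k E)
    (P : DGPoissonAlgebra k A 𝒜) (DE : DGAlgebra k E ℰ)
    (α : A →ₐ[k] E) (β : A →ₗ[k] E) : Prop :=
  UEACompat k 𝒜 ℰ P DE.d α β ∧
  ∀ (D : Type) [Ring D] [Algebra k D] (𝒟 : ℤ → Submodule k D) [GradedAlgebra 𝒟]
    (dD : DGAlgebra k D 𝒟) (f : A →ₐ[k] D) (g : A →ₗ[k] D),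
    UEACompat k 𝒜 𝒟 P dD.d f g →
    ∃! φ : E →ₐ[k] D, IsDGAlgebraMap k ℰ 𝒟 DE.d dD.d φ ∧
      φ.comp α = f ∧ φ.toLinearMap.comp β = g

/-- The two-sided ideal of `F` generated by a set `S`, as a `k`-submodule. -/
def idealGen (k : Type) [Field k] {F : Type} [Ring F] [Algebra k F] (S : Set F) :
    Submodule k F :=
  Submodule.span k {z : F | ∃ u v : F, ∃ s ∈ S, z = u * s * v}

/-- The left ideal of `F` generated by a set `S`, as a `k`-submodule. -/
def leftIdealGen (k : Type) [Field k] {F : Type} [Ring F] [Algebra k F] (S : Set F) :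
    Submodule k F :=
  Submodule.span k {z : F | ∃ u : F, ∃ s ∈ S, z = u * s}

/-- A submodule is graded if it is spanned by its homogeneous elements. -/
def IsGradedSubmodule (k : Type) [Field k] {A : Type} [AddCommGroup A] [Module k A]
    (𝒜 : ℤ → Submodule k A) (M : Submodule k A) : Prop :=
  M ≤ Submodule.span k {a : A | a ∈ M ∧ ∃ i, a ∈ 𝒜 i}

/-- A `k`-submodule which is a two-sided ideal. -/
def IsTwoSidedIdealSub (k : Type) [Field k] {A : Type} [Ring A] [Algebra k A]
    (M : Submodule k A) : Prop :=
  ∀ r : A, ∀ m ∈ M, r * m ∈ M ∧ m * r ∈ M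

/-- A DG ideal: a graded two-sided ideal closed under the differential `d`. -/
def IsDGIdeal (k : Type) [Field k] {A : Type} [Ring A] [Algebra k A]
    (𝒜 : ℤ → Submodule k A) (d : A →ₗ[k] A) (M : Submodule k A) : Prop :=
  IsTwoSidedIdealSub k M ∧ IsGradedSubmodule k 𝒜 M ∧ ∀ m ∈ M, d m ∈ M

/-- A DG Poisson ideal: a DG ideal which is also closed under the Poisson bracket. -/
def IsDGPoissonIdeal (k : Type) [Field k] {A : Type} [Ring A] [Algebra k A]
    (𝒜 : ℤ → Submodule k A) (P : DGPoissonAlgebra k A 𝒜) (M : Submodule k A) : Prop :=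
  IsDGIdeal k 𝒜 P.d M ∧ ∀ a : A, ∀ m ∈ M, P.br a m ∈ M

/-- `π : A → B` presents `B` as the quotient of `A` by `I`. -/
structure IsQuotientBy (k : Type) [Field k] {A B : Type} [Ring A] [Algebra k A]
    [Ring B] [Algebra k B] (π : A →ₐ[k] B) (I : Submodule k A) : Prop where
  surj : Function.Surjective π
  ker : ∀ a : A, π a = 0 ↔ a ∈ I

/-- The (noncommutative, ordered) monomial `x 0 ^ e 0 * x 1 ^ e 1 * ⋯` . -/
def xMono {n : ℕ} {R : Type} [Ring R] (x : Fin n → R) (e : Fin n → ℕ) : R :=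
  ((List.finRange n).map fun r => x r ^ e r).prod
set_option synthInstance.maxHeartbeats 1000000
set_option maxHeartbeats 2000000

lemma sgn_zero : sgn 0 = 1 := rfl

lemma sgn_add (m n : ℤ) : sgn (m + n) = sgn m * sgn n := by
  simp [sgn, Int.negOnePow_add]

lemma sgn_sq (m : ℤ) : sgn m * sgn m = 1 := by
  rw [← sgn_add]
  have : m + m = 2 * m := by ring
  simp [sgn, this, Int.negOnePow_two_mul]

section Eps

variable {k R : Type} [Field k] [Ring R] [Algebra k R]
variable (𝒜 : ℤ → Submodule k R) [GradedAlgebra 𝒜]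

/-- The sign operator multiplying the degree-`i` component by `(-1)^i`. -/
def eps (a : R) : R := ∑ᶠ i : ℤ, sgn i • (DirectSum.decompose 𝒜 a i : R)

lemma eps_supp_fin (a : R) :
    (Function.support fun i : ℤ => sgn i • (DirectSum.decompose 𝒜 a i : R)).Finite := by
  apply Set.Finite.subset (DFinsupp.finite_support (DirectSum.decompose 𝒜 a))
  intro j hj
  simp only [Function.mem_support] at hj
  simp only [Set.mem_setOf_eq]
  intro h0
  apply hj
  rw [h0]
  simp

lemma eps_of_mem {i : ℤ} {a : R} (ha : a ∈ 𝒜 i) : eps 𝒜 a = sgn i • a := by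
  rw [eps, finsum_eq_single _ i]
  · rw [DirectSum.decompose_of_mem_same 𝒜 ha]
  · intro j hj
    rw [DirectSum.decompose_of_mem_ne 𝒜 ha (Ne.symm hj), smul_zero]

lemma eps_zero : eps 𝒜 (0 : R) = 0 := by
  rw [eps_of_mem 𝒜 (Submodule.zero_mem (𝒜 0)), smul_zero]

lemma eps_add (a b : R) : eps 𝒜 (a + b) = eps 𝒜 a + eps 𝒜 b := by
  rw [eps, eps, eps, ← finsum_add_distrib (eps_supp_fin 𝒜 a) (eps_supp_fin 𝒜 b)]
  apply finsum_congr
  intro j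
  rw [DirectSum.decompose_add]
  simp [smul_add]

lemma eps_zsmul (z : ℤ) (a : R) : eps 𝒜 (z • a) = z • eps 𝒜 a := by
  have h1 : eps 𝒜 (z • a) = ∑ᶠ j : ℤ, z • (sgn j • (DirectSum.decompose 𝒜 a j : R)) := by
    unfold eps
    apply finsum_congr
    intro j
    have : DirectSum.decompose 𝒜 (z • a) = z • DirectSum.decompose 𝒜 a :=
      map_zsmul (DirectSum.decomposeAddEquiv 𝒜) z a
    rw [this, DFinsupp.smul_apply, AddSubgroupClass.coe_zsmul, smul_comm]
  rw [h1]
  have := (AddMonoidHom.map_finsum (zsmulAddGroupHom z) (eps_supp_fin 𝒜 a)).symm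
  simpa [zsmulAddGroupHom, eps] using this

lemma eps_ksmul (c : k) (a : R) : eps 𝒜 (c • a) = c • eps 𝒜 a := by
  have h1 : eps 𝒜 (c • a) = ∑ᶠ j : ℤ, c • (sgn j • (DirectSum.decompose 𝒜 a j : R)) := by
    unfold eps
    apply finsum_congr
    intro j
    have : DirectSum.decompose 𝒜 (c • a) = c • DirectSum.decompose 𝒜 a := by
      have := map_smul (DirectSum.decomposeAlgEquiv 𝒜).toLinearMap c a
      simpa using this
    rw [this, DFinsupp.smul_apply, Submodule.coe_smul, smul_comm]
  rw [h1]
  have := (AddMonoidHom.map_finsum ((c • (LinearMap.id : R →ₗ[k] R)).toAddMonoidHom)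
      (eps_supp_fin 𝒜 a)).symm
  simpa [eps] using this

end Eps

section Main

variable {k R : Type} [Field k] [Ring R] [Algebra k R] {Λ : Type}
variable {𝒜 : ℤ → Submodule k R} [GradedAlgebra 𝒜]
variable (P : DGPoissonAlgebra k R 𝒜) (x : Λ → R) (ψ : Λ → R →ₗ[k] R) (α : Λ)

/-- The defect map. -/
def Tm (a : R) : R :=
  ψ α (P.d a) - P.d (ψ α a) - ∑ᶠ β, eps 𝒜 (ψ β a) * ψ α (P.d (x β))

lemma supp_fin2 (hψfin : ∀ a : R, (Function.support fun β => ψ β a).Finite)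
    (a : R) (F : Λ → R → R) (hF : ∀ β, F β 0 = 0) :
    (Function.support fun β => F β (ψ β a)).Finite :=
  (hψfin a).subset fun β hβ => by
    simp only [Function.mem_support] at hβ ⊢
    intro h
    exact hβ (by rw [h, hF])

lemma Tm_add (hψfin : ∀ a : R, (Function.support fun β => ψ β a).Finite) (a b : R) :
    Tm P x ψ α (a + b) = Tm P x ψ α a + Tm P x ψ α b := by
  unfold Tm
  have hs : (∑ᶠ β, eps 𝒜 (ψ β (a + b)) * ψ α (P.d (x β)))
      = (∑ᶠ β, eps 𝒜 (ψ β a) * ψ α (P.d (x β)))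
        + ∑ᶠ β, eps 𝒜 (ψ β b) * ψ α (P.d (x β)) := by
    rw [← finsum_add_distrib
      (supp_fin2 ψ hψfin a (fun β t => eps 𝒜 t * ψ α (P.d (x β)))
        (fun β => by simp [eps_zero]))
      (supp_fin2 ψ hψfin b (fun β t => eps 𝒜 t * ψ α (P.d (x β)))
        (fun β => by simp [eps_zero]))]
    exact finsum_congr fun β => by rw [map_add, eps_add, add_mul]
  rw [hs]
  simp only [map_add]
  abel

lemma Tm_smul (hψfin : ∀ a : R, (Function.support fun β => ψ β a).Finite) (c : k) (a : R) :
    Tm P x ψ α (c • a) = c • Tm P x ψ α a := by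
  unfold Tm
  have hs : (∑ᶠ β, eps 𝒜 (ψ β (c • a)) * ψ α (P.d (x β)))
      = c • ∑ᶠ β, eps 𝒜 (ψ β a) * ψ α (P.d (x β)) := by
    rw [smul_finsum' c (supp_fin2 ψ hψfin a (fun β t => eps 𝒜 t * ψ α (P.d (x β)))
        (fun β => by simp [eps_zero]))]
    exact finsum_congr fun β => by rw [map_smul, eps_ksmul, smul_mul_assoc]
  rw [hs]
  simp only [map_smul]
  rw [smul_sub, smul_sub]

lemma Tm_zero : Tm P x ψ α 0 = 0 := by
  unfold Tm
  simp only [map_zero, eps_zero, zero_mul, finsum_zero, sub_zero, sub_self]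

lemma d_one : P.d (1 : R) = 0 := by
  have h1 : (1 : R) ∈ 𝒜 0 := SetLike.one_mem_graded 𝒜
  have h := P.d_mul h1 h1
  simp only [one_mul, mul_one, zero_mul, sgn_zero, one_smul] at h
  exact (left_eq_add.mp h)

lemma psi_one (hψmul : ∀ (β : Λ) ⦃i j : ℤ⦄ ⦃a b : R⦄, a ∈ 𝒜 i → b ∈ 𝒜 j →
      ψ β (a * b) = a * ψ β b + sgn (i * j) • (b * ψ β a)) (β : Λ) :
    ψ β (1 : R) = 0 := by
  have h1 : (1 : R) ∈ 𝒜 0 := SetLike.one_mem_graded 𝒜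
  have h := hψmul β h1 h1
  simp only [one_mul, mul_one, mul_zero, sgn_zero, one_smul] at h
  exact (left_eq_add.mp h)

lemma Tm_one (hψmul : ∀ (β : Λ) ⦃i j : ℤ⦄ ⦃a b : R⦄, a ∈ 𝒜 i → b ∈ 𝒜 j →
      ψ β (a * b) = a * ψ β b + sgn (i * j) • (b * ψ β a)) :
    Tm P x ψ α 1 = 0 := by
  unfold Tm
  rw [d_one P]
  simp only [map_zero, psi_one ψ hψmul, eps_zero, zero_mul, finsum_zero, sub_zero, sub_self]

lemma Tm_x (hψx : ∀ γ, ψ γ (x γ) = 1) (hψx' : ∀ γ β, γ ≠ β → ψ γ (x β) = 0) (γ : Λ) :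
    Tm P x ψ α (x γ) = 0 := by
  unfold Tm
  have h2 : P.d (ψ α (x γ)) = 0 := by
    by_cases h : α = γ
    · subst h; rw [hψx, d_one]
    · rw [hψx' α γ h, map_zero]
  have h3 : (∑ᶠ β, eps 𝒜 (ψ β (x γ)) * ψ α (P.d (x β))) = ψ α (P.d (x γ)) := by
    rw [finsum_eq_single _ γ (fun β hβ => by rw [hψx' β γ hβ, eps_zero, zero_mul])]
    rw [hψx γ, eps_of_mem 𝒜 (SetLike.one_mem_graded 𝒜), sgn_zero, one_smul, one_mul]
  rw [h2, h3]
  abel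

lemma Tm_mul (w : Λ → ℤ)
    (hψmem : ∀ (β : Λ) ⦃i : ℤ⦄ ⦃a : R⦄, a ∈ 𝒜 i → ψ β a ∈ 𝒜 (i - w β))
    (hψmul : ∀ (β : Λ) ⦃i j : ℤ⦄ ⦃a b : R⦄, a ∈ 𝒜 i → b ∈ 𝒜 j →
      ψ β (a * b) = a * ψ β b + sgn (i * j) • (b * ψ β a))
    (hψfin : ∀ a : R, (Function.support fun β => ψ β a).Finite)
    {i j : ℤ} {a b : R} (ha : a ∈ 𝒜 i) (hb : b ∈ 𝒜 j) :
    Tm P x ψ α (a * b)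
      = sgn i • (a * Tm P x ψ α b) + sgn (i * j + j) • (b * Tm P x ψ α a) := by
  have e1 : (i + 1) * j = i * j + j := by ring
  have e2 : sgn i * sgn (i * (j + 1)) = sgn (i * j) := by
    have e : i * (j + 1) = i * j + i := by ring
    rw [e, sgn_add]
    calc sgn i * (sgn (i * j) * sgn i) = sgn (i * j) * (sgn i * sgn i) := by ring
      _ = sgn (i * j) := by rw [sgn_sq, mul_one]
  have h1 : ψ α (P.d (a * b))
      = P.d a * ψ α b + sgn (i * j + j) • (b * ψ α (P.d a))
        + sgn i • (a * ψ α (P.d b)) + sgn (i * j) • (P.d b * ψ α a) := by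
    rw [P.d_mul ha hb, map_add, map_zsmul, hψmul α (P.d_mem ha) hb,
      hψmul α ha (P.d_mem hb), e1, smul_add, smul_smul, e2]
    abel
  have h2 : P.d (ψ α (a * b))
      = P.d a * ψ α b + sgn i • (a * P.d (ψ α b))
        + sgn (i * j) • (P.d b * ψ α a) + sgn (i * j + j) • (b * P.d (ψ α a)) := by
    rw [hψmul α ha hb, map_add, map_zsmul, P.d_mul ha (hψmem α hb),
      P.d_mul hb (hψmem α ha), smul_add, smul_smul, ← sgn_add]
    abel
  have hf1 : (Function.support fun β =>
      (sgn i * sgn (j - w β)) • (a * (ψ β b * ψ α (P.d (x β))))).Finite :=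
    supp_fin2 ψ hψfin b (fun β t => (sgn i * sgn (j - w β)) • (a * (t * ψ α (P.d (x β)))))
      (fun β => by simp)
  have hf2 : (Function.support fun β =>
      (sgn (i * j + j) * sgn (i - w β)) • (b * (ψ β a * ψ α (P.d (x β))))).Finite :=
    supp_fin2 ψ hψfin a
      (fun β t => (sgn (i * j + j) * sgn (i - w β)) • (b * (t * ψ α (P.d (x β)))))
      (fun β => by simp)
  have hfb : (Function.support fun β => eps 𝒜 (ψ β b) * ψ α (P.d (x β))).Finite :=
    supp_fin2 ψ hψfin b (fun β t => eps 𝒜 t * ψ α (P.d (x β)))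
      (fun β => by simp [eps_zero])
  have hfa : (Function.support fun β => eps 𝒜 (ψ β a) * ψ α (P.d (x β))).Finite :=
    supp_fin2 ψ hψfin a (fun β t => eps 𝒜 t * ψ α (P.d (x β)))
      (fun β => by simp [eps_zero])
  have h3 : (∑ᶠ β, eps 𝒜 (ψ β (a * b)) * ψ α (P.d (x β)))
      = (∑ᶠ β, (sgn i * sgn (j - w β)) • (a * (ψ β b * ψ α (P.d (x β)))))
        + ∑ᶠ β, (sgn (i * j + j) * sgn (i - w β)) • (b * (ψ β a * ψ α (P.d (x β)))) := by
    rw [← finsum_add_distrib hf1 hf2]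
    apply finsum_congr
    intro β
    rw [hψmul β ha hb, eps_add, eps_zsmul,
      eps_of_mem 𝒜 (SetLike.mul_mem_graded ha (hψmem β hb)),
      eps_of_mem 𝒜 (SetLike.mul_mem_graded hb (hψmem β ha)), add_mul,
      smul_mul_assoc, smul_mul_assoc, smul_mul_assoc, smul_smul, mul_assoc, mul_assoc]
    congr 1
    · rw [← sgn_add]
    · congr 1
      simp only [sgn_add]
      ring
  have hR1 : sgn i • (a * ∑ᶠ β, eps 𝒜 (ψ β b) * ψ α (P.d (x β)))
      = ∑ᶠ β, (sgn i * sgn (j - w β)) • (a * (ψ β b * ψ α (P.d (x β)))) := by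
    rw [mul_finsum' _ a hfb, smul_finsum' (sgn i) (by
      exact supp_fin2 ψ hψfin b (fun β t => a * (eps 𝒜 t * ψ α (P.d (x β))))
        (fun β => by simp [eps_zero]))]
    apply finsum_congr
    intro β
    rw [eps_of_mem 𝒜 (hψmem β hb), smul_mul_assoc, mul_smul_comm, smul_smul]
  have hR2 : sgn (i * j + j) • (b * ∑ᶠ β, eps 𝒜 (ψ β a) * ψ α (P.d (x β)))
      = ∑ᶠ β, (sgn (i * j + j) * sgn (i - w β)) • (b * (ψ β a * ψ α (P.d (x β)))) := by
    rw [mul_finsum' _ b hfa, smul_finsum' (sgn (i * j + j)) (by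
      exact supp_fin2 ψ hψfin a (fun β t => b * (eps 𝒜 t * ψ α (P.d (x β))))
        (fun β => by simp [eps_zero]))]
    apply finsum_congr
    intro β
    rw [eps_of_mem 𝒜 (hψmem β ha), smul_mul_assoc, mul_smul_comm, smul_smul]
  unfold Tm
  rw [h1, h2, h3, mul_sub, mul_sub, mul_sub, mul_sub,
    smul_sub, smul_sub, smul_sub, smul_sub, hR1, hR2]
  abel

end Main
/-- For the free graded-commutative DG Poisson algebra `R` on
homogeneous generators `x α` (of degree `w α`), with anti-differentials `ψ α`, one has
`ψ α (d a) - d (ψ α a) - ∑_β (-1)^{|ψ_β a|} ψ_β a * ψ_α (d x_β) = 0` for every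
homogeneous `a ∈ R` and every `α`. -/
theorem stmt1 (k R : Type) [Field k] [Ring R] [Algebra k R] (Λ : Type)
    (𝒜 : ℤ → Submodule k R) [GradedAlgebra 𝒜]
    (P : DGPoissonAlgebra k R 𝒜)
    (x : Λ → R) (w : Λ → ℤ) (hx : ∀ α, x α ∈ 𝒜 (w α))
    (hgen : Algebra.adjoin k (Set.range x) = ⊤)
    (ψ : Λ → R →ₗ[k] R)
    (hψx : ∀ α, ψ α (x α) = 1) (hψx' : ∀ α β, α ≠ β → ψ α (x β) = 0)
    (hψmem : ∀ (α : Λ) ⦃i : ℤ⦄ ⦃a : R⦄, a ∈ 𝒜 i → ψ α a ∈ 𝒜 (i - w α))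
    (hψmul : ∀ (α : Λ) ⦃i j : ℤ⦄ ⦃a b : R⦄, a ∈ 𝒜 i → b ∈ 𝒜 j →
      ψ α (a * b) = a * ψ α b + sgn (i * j) • (b * ψ α a))
    (hψfin : ∀ a : R, (Function.support fun α => ψ α a).Finite) :
    ∀ (α : Λ) ⦃i : ℤ⦄ ⦃a : R⦄, a ∈ 𝒜 i →
      ψ α (P.d a) - P.d (ψ α a)
        - ∑ᶠ β : Λ, sgn (i - w β) • (ψ β a * ψ α (P.d (x β))) = 0 := by
  intro α
  have h0 : ∀ b : R, Tm P x ψ α b = 0 := by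
    have hcl : ∀ b ∈ Submonoid.closure (Set.range x),
        (∃ n : ℤ, b ∈ 𝒜 n) ∧ Tm P x ψ α b = 0 := by
      intro b hb
      induction hb using Submonoid.closure_induction with
      | mem y hy =>
        obtain ⟨γ, rfl⟩ := hy
        exact ⟨⟨w γ, hx γ⟩, Tm_x P x ψ α hψx (fun γ β h => hψx' γ β h) γ⟩
      | one => exact ⟨⟨0, SetLike.one_mem_graded 𝒜⟩, Tm_one P x ψ α hψmul⟩
      | mul u v hu hv ihu ihv =>
        obtain ⟨⟨n, hn⟩, hTu⟩ := ihu
        obtain ⟨⟨m, hm⟩, hTv⟩ := ihv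
        refine ⟨⟨n + m, SetLike.mul_mem_graded hn hm⟩, ?_⟩
        rw [Tm_mul P x ψ α w hψmem hψmul hψfin hn hm, hTu, hTv]
        simp
    intro b
    have hb : b ∈ Submodule.span k ((Submonoid.closure (Set.range x) : Submonoid R) : Set R) := by
      rw [← Algebra.adjoin_eq_span, hgen]
      exact Submodule.mem_top
    induction hb using Submodule.span_induction with
    | mem y hy => exact (hcl y hy).2
    | zero => exact Tm_zero P x ψ α
    | add u v hu hv ihu ihv => rw [Tm_add P x ψ α hψfin, ihu, ihv, add_zero]
    | smul c u hu ihu => rw [Tm_smul P x ψ α hψfin, ihu, smul_zero]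
  intro i a ha
  have hs : (∑ᶠ β : Λ, sgn (i - w β) • (ψ β a * ψ α (P.d (x β))))
      = ∑ᶠ β, eps 𝒜 (ψ β a) * ψ α (P.d (x β)) :=
    finsum_congr fun β => by rw [eps_of_mem 𝒜 (hψmem β ha), smul_mul_assoc]
  rw [hs]
  exact h0 a
end
end

section
/- For all homogeneous elements a, b of R, one has {a, b} = Σ_{α in Λ} ψ_α(a) {x_α, b} in R (the sum having only finitely many nonzero terms). -/
noncomputable section

open scoped DirectSum

/-- `sgn` is multiplicative-to-additive: `sgn m * sgn n = sgn (m + n)`. -/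
lemma sgn_mul_sgn (m n : ℤ) : sgn m * sgn n = sgn (m + n) := by
  simp [sgn, Int.negOnePow_add]

/-- `sgn` only depends on parity. -/
lemma sgn_congr {m n : ℤ} (t : ℤ) (h : m = n + 2 * t) : sgn m = sgn n := by
  subst h
  simp [sgn, Int.negOnePow_add, Int.negOnePow_two_mul]

/-- In the free graded-commutative DG Poisson algebra `R` on
homogeneous generators `x α`, for all homogeneous `a, b ∈ R` one has
`{a, b} = ∑_α ψ_α(a) * {x_α, b}`. -/
theorem stmt2 (k R : Type) [Field k] [Ring R] [Algebra k R] (Λ : Type)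
    (𝒜 : ℤ → Submodule k R) [GradedAlgebra 𝒜]
    (P : DGPoissonAlgebra k R 𝒜)
    (x : Λ → R) (w : Λ → ℤ) (hx : ∀ α, x α ∈ 𝒜 (w α))
    (hgen : Algebra.adjoin k (Set.range x) = ⊤)
    (ψ : Λ → R →ₗ[k] R)
    (hψx : ∀ α, ψ α (x α) = 1) (hψx' : ∀ α β, α ≠ β → ψ α (x β) = 0)
    (hψmem : ∀ (α : Λ) ⦃i : ℤ⦄ ⦃a : R⦄, a ∈ 𝒜 i → ψ α a ∈ 𝒜 (i - w α))
    (hψmul : ∀ (α : Λ) ⦃i j : ℤ⦄ ⦃a b : R⦄, a ∈ 𝒜 i → b ∈ 𝒜 j →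
      ψ α (a * b) = a * ψ α b + sgn (i * j) • (b * ψ α a))
    (hψfin : ∀ a : R, (Function.support fun α => ψ α a).Finite) :
    ∀ ⦃i j : ℤ⦄ ⦃a b : R⦄, a ∈ 𝒜 i → b ∈ 𝒜 j →
      P.br a b = ∑ᶠ α : Λ, ψ α a * P.br (x α) b := by
  intro i j a b ha hb
  have h1 : (1 : R) ∈ 𝒜 0 := SetLike.one_mem_graded 𝒜
  -- the bracket of `b` with `1` vanishes
  have hbr_b1 : P.br b (1 : R) = 0 := by
    have h := P.leibniz hb h1 h1
    simp only [mul_one, one_mul, mul_zero, sgn_zero, one_smul] at h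
    exact (left_eq_add.mp h)
  have hbr_1b : P.br (1 : R) b = 0 := by
    have h := P.antisymm h1 hb
    rw [hbr_b1] at h
    simpa using h
  -- `ψ α 1 = 0`
  have hψ1 : ∀ α, ψ α (1 : R) = 0 := by
    intro α
    have h := hψmul α h1 h1
    simp only [mul_one, one_mul, mul_zero, sgn_zero, one_smul] at h
    exact (left_eq_add.mp h)
  -- finiteness of supports
  have hsupp : ∀ (c : R) (g : Λ → R),
      (Function.support fun α => ψ α c * g α).Finite := by
    intro c g
    refine (hψfin c).subset ?_
    intro α hα
    simp only [Function.mem_support] at hα ⊢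
    intro h0
    exact hα (by rw [h0, zero_mul])
  -- the key induction over the multiplicative closure of the generators
  have key : ∀ c ∈ Submonoid.closure (Set.range x),
      (∃ l, c ∈ 𝒜 l) ∧ P.br c b = ∑ᶠ α, ψ α c * P.br (x α) b := by
    intro c hc
    induction hc using Submonoid.closure_induction with
    | mem z hz =>
      obtain ⟨β, rfl⟩ := hz
      refine ⟨⟨w β, hx β⟩, ?_⟩
      rw [finsum_eq_single _ β (fun α hαβ => by rw [hψx' α β hαβ, zero_mul]),
        hψx, one_mul]
    | one =>
      refine ⟨⟨0, h1⟩, ?_⟩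
      rw [hbr_1b]
      have : (fun α => ψ α (1 : R) * P.br (x α) b) = fun _ => 0 := by
        funext α; rw [hψ1 α, zero_mul]
      rw [this, finsum_zero]
    | mul z v hzc hvc ihz ihv =>
      obtain ⟨⟨p, hzp⟩, hzM⟩ := ihz
      obtain ⟨⟨q, hvq⟩, hvM⟩ := ihv
      refine ⟨⟨p + q, SetLike.mul_mem_graded hzp hvq⟩, ?_⟩
      -- right-hand side computation
      have hR : (∑ᶠ α, ψ α (z * v) * P.br (x α) b)
          = z * P.br v b + sgn (p * q) • (v * P.br z b) := by
        have step1 : (fun α => ψ α (z * v) * P.br (x α) b)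
            = fun α => z * (ψ α v * P.br (x α) b)
              + sgn (p * q) • (v * (ψ α z * P.br (x α) b)) := by
          funext α
          rw [hψmul α hzp hvq, add_mul, smul_mul_assoc, mul_assoc, mul_assoc]
        rw [step1, finsum_add_distrib ((hsupp v _).subset (by
              intro α hα
              simp only [Function.mem_support] at hα ⊢
              intro h0; exact hα (by rw [h0, mul_zero])))
            (((hsupp z _).subset (by
              intro α hα
              simp only [Function.mem_support] at hα ⊢
              intro h0; exact hα (by rw [h0, mul_zero, smul_zero])))),
          ← mul_finsum' _ _ (hsupp v _), ← smul_finsum' _ ((hsupp z _).subset (by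
              intro α hα
              simp only [Function.mem_support] at hα ⊢
              intro h0; exact hα (by rw [h0, mul_zero]))),
          ← mul_finsum' _ _ (hsupp z _), ← hzM, ← hvM]
      rw [hR]
      -- left-hand side computation
      have e1 := P.antisymm (SetLike.mul_mem_graded hzp hvq) hb
      have e2 := P.leibniz hb hzp hvq
      have e3 := P.antisymm hb hzp
      have e4 := P.antisymm hb hvq
      rw [e2, e3, e4] at e1
      rw [e1]
      simp only [neg_mul, mul_neg, smul_neg, smul_add, smul_smul, smul_mul_assoc,
        mul_smul_comm, neg_neg, neg_add_rev, sgn_mul_sgn]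
      have c1 : sgn ((p + q) * j + j * p) = sgn (q * j) :=
        sgn_congr (p * j) (by ring)
      have c2 : sgn ((p + q) * j + (j * p + j * q)) = sgn 0 :=
        sgn_congr (p * j + q * j) (by ring)
      have c3 : P.br z b * v = sgn ((p + j) * q) • (v * P.br z b) :=
        P.gcomm (P.br_mem hzp hb) hvq
      rw [c1, c2, sgn_zero, one_smul, c3, smul_smul, sgn_mul_sgn]
      have c4 : sgn (q * j + (p + j) * q) = sgn (p * q) :=
        sgn_congr (q * j) (by ring)
      rw [c4, add_comm]
  -- now extend to all of `R` by linearity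
  have hmem : a ∈ Submodule.span k ((Submonoid.closure (Set.range x) : Submonoid R) : Set R) := by
    have h2 : a ∈ Subalgebra.toSubmodule (Algebra.adjoin k (Set.range x)) := by
      rw [hgen, Algebra.top_toSubmodule]; exact Submodule.mem_top
    rwa [Algebra.adjoin_eq_span] at h2
  clear ha
  induction hmem using Submodule.span_induction with
  | mem z hz => exact (key z hz).2
  | zero =>
    simp only [map_zero, LinearMap.zero_apply, zero_mul, finsum_zero]
  | add z v hzc hvc ihz ihv =>
    rw [map_add, LinearMap.add_apply, ihz, ihv,
      ← finsum_add_distrib (hsupp z _) (hsupp v _)]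
    exact finsum_congr fun α => by rw [map_add, add_mul]
  | smul r z hzc ihz =>
    rw [map_smul, LinearMap.smul_apply, ihz, smul_finsum' r (hsupp z _)]
    exact finsum_congr fun α => by rw [map_smul, smul_mul_assoc]
end
end

section
/- Let ∂ : F(R) -> F(R) be the unique degree-1 k-linear map satisfying ∂(x_α) = d(x_α), ∂(y_α) = ψ(d(x_α)) = Σ_β ψ_β(d(x_α)) y_β for all α in Λ, and the graded Leibniz rule ∂(uv) = ∂(u)v + (-1)^{|u|} u ∂(v) for homogeneous u, v in F(R). Then ∂^2 = 0, i.e. (F(R), ∂) is a DG algebra. -/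
noncomputable section

open scoped DirectSum

lemma sgn_succ (m : ℤ) : sgn (m + 1) = -sgn m := by
  rw [sgn_add]; simp [sgn]

lemma sgn_add_self_add (m n : ℤ) : sgn (m + (n + n)) = sgn m := by
  rw [sgn_add, sgn_add, ← mul_assoc, mul_assoc (sgn m), sgn_sq, mul_one]

/-- If a submodule contains `1` and the homogeneous generators and is closed under
products of homogeneous elements, it is everything. -/
lemma auxTop {k R Λ : Type} [Field k] [Ring R] [Algebra k R]
    (𝒜 : ℤ → Submodule k R) [GradedAlgebra 𝒜]
    (x : Λ → R) (w : Λ → ℤ) (hx : ∀ α, x α ∈ 𝒜 (w α))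
    (hgen : Algebra.adjoin k (Set.range x) = ⊤)
    (N : Submodule k R) (hxN : ∀ α, x α ∈ N) (h1 : (1 : R) ∈ N)
    (hmul : ∀ ⦃i j : ℤ⦄ ⦃a b : R⦄, a ∈ 𝒜 i → b ∈ 𝒜 j → a ∈ N → b ∈ N → a * b ∈ N) :
    ∀ a : R, a ∈ N := by
  set S : Set R := {a : R | (∃ i, a ∈ 𝒜 i) ∧ a ∈ N} with hS
  set M := Submodule.span k S with hM
  have hMN : M ≤ N := Submodule.span_le.mpr fun a ha => ha.2
  have h1S : (1 : R) ∈ S := ⟨⟨0, SetLike.one_mem_graded 𝒜⟩, h1⟩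
  have hSmul : ∀ a ∈ S, ∀ b ∈ S, a * b ∈ S := by
    rintro a ⟨⟨i, hai⟩, haN⟩ b ⟨⟨j, hbj⟩, hbN⟩
    exact ⟨⟨i + j, SetLike.mul_mem_graded hai hbj⟩, hmul hai hbj haN hbN⟩
  have hml : ∀ a ∈ M, ∀ b ∈ M, a * b ∈ M := by
    have H : ∀ a ∈ S, ∀ b ∈ M, a * b ∈ M := by
      intro a haS b hb
      induction hb using Submodule.span_induction with
      | mem c hc => exact Submodule.subset_span (hSmul a haS c hc)
      | zero => simp
      | add c d _ _ ihc ihd => rw [mul_add]; exact add_mem ihc ihd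
      | smul c d _ ih => rw [mul_smul_comm]; exact Submodule.smul_mem _ _ ih
    intro a ha b hb
    induction ha using Submodule.span_induction with
    | mem c hc => exact H c hc b hb
    | zero => simp
    | add c d _ _ ihc ihd => rw [add_mul]; exact add_mem ihc ihd
    | smul c d _ ih => rw [smul_mul_assoc]; exact Submodule.smul_mem _ _ ih
  have hMtop : ∀ a : R, a ∈ M := by
    have hsub : Algebra.adjoin k (Set.range x) ≤
        M.toSubalgebra (Submodule.subset_span h1S) (fun a b ha hb => hml a ha b hb) := by
      apply Algebra.adjoin_le
      rintro _ ⟨α, rfl⟩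
      exact Submodule.subset_span ⟨⟨w α, hx α⟩, hxN α⟩
    intro a
    exact hsub (hgen ▸ Algebra.mem_top : a ∈ Algebra.adjoin k (Set.range x))
  exact fun a => hMN (hMtop a)

lemma psiSupp {k R F Λ : Type} [Field k] [Ring R] [Algebra k R] [Ring F] [Algebra k F]
    (ι : R →ₐ[k] F) (ψ : Λ → R →ₗ[k] R) (y : Λ → F) (a : R) :
    (Function.support fun β => ι (ψ β a) * y β) ⊆ Function.support fun β => ψ β a := by
  intro β hβ
  simp only [Function.mem_support] at hβ ⊢
  intro h0
  exact hβ (by rw [h0, map_zero, zero_mul])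

/-- The map `Ψ : a ↦ ∑ᶠ β, ι (ψ β a) * y β` as a `k`-linear map. -/
def PsiMap {k R F Λ : Type} [Field k] [Ring R] [Algebra k R] [Ring F] [Algebra k F]
    (ι : R →ₐ[k] F) (ψ : Λ → R →ₗ[k] R) (y : Λ → F)
    (hψfin : ∀ a : R, (Function.support fun α => ψ α a).Finite) : R →ₗ[k] F where
  toFun a := ∑ᶠ β, ι (ψ β a) * y β
  map_add' a b := by
    have h : (fun β => ι (ψ β (a + b)) * y β)
        = fun β => ι (ψ β a) * y β + ι (ψ β b) * y β := by
      funext β; rw [map_add, map_add, add_mul]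
    show (∑ᶠ β, ι (ψ β (a + b)) * y β) = _
    rw [h, finsum_add_distrib ((hψfin a).subset (psiSupp ι ψ y a))
      ((hψfin b).subset (psiSupp ι ψ y b))]
  map_smul' c a := by
    have h : (fun β => ι (ψ β (c • a)) * y β) = fun β => c • (ι (ψ β a) * y β) := by
      funext β; rw [map_smul, map_smul, smul_mul_assoc]
    show (∑ᶠ β, ι (ψ β (c • a)) * y β) = _
    simp only [RingHom.id_apply]
    rw [h, ← smul_finsum' c ((hψfin a).subset (psiSupp ι ψ y a))]

/-- Let `F = R⟨y_α⟩` and let `∂ : F → F` be the degree-1 `k`-linear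
map with `∂(x_α) = d(x_α)`, `∂(y_α) = ψ(d(x_α)) = ∑_β ψ_β(d(x_α)) y_β` and satisfying
the graded Leibniz rule.  Then `∂² = 0`, i.e. `(F, ∂)` is a DG algebra. -/
theorem stmt3 (k R F : Type) [Field k] [Ring R] [Algebra k R] [Ring F] [Algebra k F]
    (Λ : Type) (𝒜 : ℤ → Submodule k R) [GradedAlgebra 𝒜]
    (ℱ : ℤ → Submodule k F) [GradedAlgebra ℱ]
    (P : DGPoissonAlgebra k R 𝒜)
    (x : Λ → R) (w : Λ → ℤ) (hx : ∀ α, x α ∈ 𝒜 (w α))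
    (hgen : Algebra.adjoin k (Set.range x) = ⊤)
    (ψ : Λ → R →ₗ[k] R)
    (hψx : ∀ α, ψ α (x α) = 1) (hψx' : ∀ α β, α ≠ β → ψ α (x β) = 0)
    (hψmem : ∀ (α : Λ) ⦃i : ℤ⦄ ⦃a : R⦄, a ∈ 𝒜 i → ψ α a ∈ 𝒜 (i - w α))
    (hψmul : ∀ (α : Λ) ⦃i j : ℤ⦄ ⦃a b : R⦄, a ∈ 𝒜 i → b ∈ 𝒜 j →
      ψ α (a * b) = a * ψ α b + sgn (i * j) • (b * ψ α a))
    (hψfin : ∀ a : R, (Function.support fun α => ψ α a).Finite)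
    -- `F = R⟨y_α | α ∈ Λ⟩`, with `ι : R → F` the canonical inclusion
    (ι : R →ₐ[k] F) (hι : ∀ ⦃i : ℤ⦄ ⦃a : R⦄, a ∈ 𝒜 i → ι a ∈ ℱ i)
    (hιinj : Function.Injective ι)
    (y : Λ → F) (hy : ∀ α, y α ∈ ℱ (w α))
    (hFgen : Algebra.adjoin k ((Set.range fun α => ι (x α)) ∪ Set.range y) = ⊤)
    -- the map `∂`
    (D : F →ₗ[k] F)
    (hDmem : ∀ ⦃i : ℤ⦄ ⦃u : F⦄, u ∈ ℱ i → D u ∈ ℱ (i + 1))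
    (hDx : ∀ α, D (ι (x α)) = ι (P.d (x α)))
    (hDy : ∀ α, D (y α) = ∑ᶠ β : Λ, ι (ψ β (P.d (x α))) * y β)
    (hDmul : ∀ ⦃i j : ℤ⦄ ⦃u v : F⦄, u ∈ ℱ i → v ∈ ℱ j →
      D (u * v) = D u * v + sgn i • (u * D v)) :
    ∀ u : F, D (D u) = 0 := by
  classical
  -- basic degree-zero facts
  have h1R : (1 : R) ∈ 𝒜 0 := SetLike.one_mem_graded 𝒜
  have h1F : (1 : F) ∈ ℱ 0 := SetLike.one_mem_graded ℱ
  have hd1 : P.d 1 = 0 := by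
    have h := P.d_mul h1R h1R
    rw [one_mul, sgn_zero, one_smul, mul_one, one_mul] at h
    exact (left_eq_add.mp h)
  have hD1 : D (1 : F) = 0 := by
    have h := hDmul h1F h1F
    rw [one_mul, sgn_zero, one_smul, mul_one, one_mul] at h
    exact (left_eq_add.mp h)
  have hψ1 : ∀ α, ψ α (1 : R) = 0 := by
    intro α
    have h := hψmul α h1R h1R
    simp only [one_mul, mul_one, zero_mul, sgn_zero, one_smul] at h
    exact (left_eq_add.mp h)
  -- `D` agrees with `d` on the image of `ι`
  have hcomm : ∀ a : R, D (ι a) = ι (P.d a) := by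
    set L : R →ₗ[k] F := D ∘ₗ ι.toLinearMap - ι.toLinearMap ∘ₗ P.d with hL
    have hmemL : ∀ a : R, a ∈ LinearMap.ker L ↔ D (ι a) = ι (P.d a) := by
      intro a
      simp [hL, LinearMap.mem_ker, LinearMap.sub_apply, LinearMap.comp_apply,
        sub_eq_zero]
    have := auxTop 𝒜 x w hx hgen (LinearMap.ker L)
      (fun α => (hmemL _).mpr (hDx α))
      ((hmemL _).mpr (by rw [map_one, hD1, hd1, map_zero]))
      (by
        intro i j a b hai hbj ha hb
        rw [hmemL] at ha hb ⊢
        rw [map_mul, hDmul (hι hai) (hι hbj), ha, hb, P.d_mul hai hbj, map_add,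
          map_mul, map_zsmul, map_mul])
    exact fun a => (hmemL a).mp (this a)
  -- the map `Ψ`
  set Ψ : R →ₗ[k] F := PsiMap ι ψ y hψfin with hΨdef
  have hΨapply : ∀ a : R, Ψ a = ∑ᶠ β, ι (ψ β a) * y β := fun a => rfl
  have hfin : ∀ a : R, (Function.support fun β => ι (ψ β a) * y β).Finite :=
    fun a => (hψfin a).subset (psiSupp ι ψ y a)
  have hΨx : ∀ α, Ψ (x α) = y α := by
    intro α
    rw [hΨapply, finsum_eq_single _ α
      (fun β hβ => by rw [hψx' β α hβ, map_zero, zero_mul]),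
      hψx α, map_one, one_mul]
  have hΨmem : ∀ ⦃i : ℤ⦄ ⦃a : R⦄, a ∈ 𝒜 i → Ψ a ∈ ℱ i := by
    intro i a hai
    rw [hΨapply, finsum_eq_sum _ (hfin a)]
    refine Submodule.sum_mem _ fun β _ => ?_
    have := SetLike.mul_mem_graded (hι (hψmem β hai)) (hy β)
    rwa [sub_add_cancel] at this
  have hΨmul : ∀ ⦃i j : ℤ⦄ ⦃a b : R⦄, a ∈ 𝒜 i → b ∈ 𝒜 j →
      Ψ (a * b) = ι a * Ψ b + sgn (i * j) • (ι b * Ψ a) := by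
    intro i j a b hai hbj
    rw [hΨapply, hΨapply, hΨapply]
    have h : (fun β => ι (ψ β (a * b)) * y β)
        = fun β => ι a * (ι (ψ β b) * y β)
          + sgn (i * j) • (ι b * (ι (ψ β a) * y β)) := by
      funext β
      rw [hψmul β hai hbj, map_add, add_mul, map_mul, mul_assoc, map_zsmul,
        map_mul, smul_mul_assoc, mul_assoc]
    have hf1 : (Function.support fun β => ι a * (ι (ψ β b) * y β)).Finite := by
      refine (hfin b).subset fun β hβ => ?_
      simp only [Function.mem_support] at hβ ⊢
      intro h0; exact hβ (by rw [h0, mul_zero])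
    have hf2 : (Function.support
        fun β => sgn (i * j) • (ι b * (ι (ψ β a) * y β))).Finite := by
      refine (hfin a).subset fun β hβ => ?_
      simp only [Function.mem_support] at hβ ⊢
      intro h0; exact hβ (by rw [h0, mul_zero, smul_zero])
    rw [h, finsum_add_distrib hf1 hf2, ← mul_finsum' _ _ (hfin b),
      ← smul_finsum' (sgn (i * j)) (M := F)
        (f := fun β => ι b * (ι (ψ β a) * y β))
        (by
          refine (hfin a).subset fun β hβ => ?_
          simp only [Function.mem_support] at hβ ⊢
          intro h0; exact hβ (by rw [h0, mul_zero])),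
      ← mul_finsum' _ _ (hfin a)]
  have hΨ1 : Ψ (1 : R) = 0 := by
    rw [hΨapply]
    have : (fun β => ι (ψ β (1 : R)) * y β) = fun _ => (0 : F) := by
      funext β; rw [hψ1 β, map_zero, zero_mul]
    rw [this, finsum_zero]
  -- key claim : `D ∘ Ψ = Ψ ∘ d`
  have hDΨ : ∀ a : R, D (Ψ a) = Ψ (P.d a) := by
    set L : R →ₗ[k] F := D ∘ₗ Ψ - Ψ ∘ₗ P.d with hL
    have hmemL : ∀ a : R, a ∈ LinearMap.ker L ↔ D (Ψ a) = Ψ (P.d a) := by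
      intro a
      simp [hL, LinearMap.mem_ker, LinearMap.sub_apply, LinearMap.comp_apply,
        sub_eq_zero]
    have := auxTop 𝒜 x w hx hgen (LinearMap.ker L)
      (fun α => (hmemL _).mpr (by rw [hΨx α, hDy α, hΨapply]))
      ((hmemL _).mpr (by rw [hΨ1, map_zero, hd1, map_zero]))
      (by
        intro i j a b hai hbj ha hb
        rw [hmemL] at ha hb ⊢
        have hda : P.d a ∈ 𝒜 (i + 1) := P.d_mem hai
        have hdb : P.d b ∈ 𝒜 (j + 1) := P.d_mem hbj
        have e1 : sgn (i * j) * sgn j = sgn ((i + 1) * j) := by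
          rw [← sgn_add]; congr 1; ring
        have e2 : sgn i * sgn (i * (j + 1)) = sgn (i * j) := by
          rw [← sgn_add, show i + i * (j + 1) = i * j + (i + i) by ring,
            sgn_add_self_add]
        calc D (Ψ (a * b))
            = D (ι a * Ψ b) + sgn (i * j) • D (ι b * Ψ a) := by
              rw [hΨmul hai hbj, map_add, map_zsmul]
          _ = (ι (P.d a) * Ψ b + sgn i • (ι a * Ψ (P.d b)))
              + sgn (i * j) • (ι (P.d b) * Ψ a + sgn j • (ι b * Ψ (P.d a))) := by
              rw [hDmul (hι hai) (hΨmem hbj), hDmul (hι hbj) (hΨmem hai),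
                hcomm a, hcomm b, ha, hb]
          _ = (ι (P.d a) * Ψ b + sgn ((i + 1) * j) • (ι b * Ψ (P.d a)))
              + sgn i • (ι a * Ψ (P.d b) + sgn (i * (j + 1)) • (ι (P.d b) * Ψ a)) := by
              rw [smul_add, smul_add, smul_smul, smul_smul, e1, e2]
              abel
          _ = Ψ (P.d a * b) + sgn i • Ψ (a * P.d b) := by
              rw [hΨmul hda hbj, hΨmul hai hdb]
          _ = Ψ (P.d (a * b)) := by
              rw [P.d_mul hai hbj, map_add, map_zsmul])
    exact fun a => (hmemL a).mp (this a)
  -- conclude by generation of `F`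
  set L : F →ₗ[k] F := D ∘ₗ D with hL
  have hmemL : ∀ u : F, u ∈ LinearMap.ker L ↔ D (D u) = 0 := by
    intro u; simp [hL, LinearMap.mem_ker]
  have hrange : Set.range (Sum.elim (fun α => ι (x α)) y : Λ ⊕ Λ → F)
      = (Set.range fun α => ι (x α)) ∪ Set.range y := Set.Sum.elim_range _ _
  have := auxTop ℱ (Sum.elim (fun α => ι (x α)) y) (Sum.elim w w)
    (by rintro (α | α)
        · exact hι (hx α)
        · exact hy α)
    (by rw [hrange]; exact hFgen)
    (LinearMap.ker L)
    (by rintro (α | α)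
        · rw [hmemL]
          show D (D (ι (x α))) = 0
          rw [hDx α, hcomm, P.d_sq, map_zero]
        · rw [hmemL]
          show D (D (y α)) = 0
          rw [hDy α, ← hΨapply, hDΨ, P.d_sq, map_zero])
    ((hmemL _).mpr (by rw [hD1, map_zero]))
    (by
      intro i j u v hui hvj hu hv
      rw [hmemL] at hu hv ⊢
      rw [hDmul hui hvj, map_add, map_zsmul, hDmul (hDmem hui) hvj,
        hDmul hui (hDmem hvj), hu, hv, zero_mul, zero_add, mul_zero, smul_zero,
        add_zero, sgn_succ, neg_smul, neg_add_cancel])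
  exact fun u => (hmemL u).mp (this u)
end
end

section
/- Let I be a DG Poisson ideal of R and let Q = R^e m_R(I) + R^e h_R(I) R^e be the ideal of R^e generated by m_R(I) and h_R(I) (a DG ideal of R^e). Then the quotient DG algebra R^e/Q, together with the maps m' : R/I -> R^e/Q, m'(r + I) = m_R(r) + Q, and h' : R/I -> R^e/Q, h'(r + I) = h_R(r) + Q, is a universal enveloping algebra of the DG Poisson algebra A = R/I. -/
noncomputable section

open scoped DirectSum

set_option synthInstance.maxHeartbeats 1000000
set_option maxHeartbeats 1000000

section aux
variable {k : Type} [Field k] {A B : Type} [Ring A] [Algebra k A] [Ring B] [Algebra k B]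
  (𝒜 : ℤ → Submodule k A) (ℬ : ℤ → Submodule k B) [GradedAlgebra 𝒜] [GradedAlgebra ℬ]

lemma aux_decompose_map (π : A →ₐ[k] B)
    (hmem : ∀ ⦃i : ℤ⦄ ⦃a : A⦄, a ∈ 𝒜 i → π a ∈ ℬ i) (e : A) (i : ℤ) :
    π (DirectSum.decompose 𝒜 e i : A) = (DirectSum.decompose ℬ (π e) i : B) := by
  induction e using DirectSum.Decomposition.inductionOn 𝒜 with
  | zero => simp
  | @homogeneous j m =>
    by_cases h : i = j
    · subst h
      rw [DirectSum.decompose_of_mem_same 𝒜 m.2, DirectSum.decompose_of_mem_same ℬ (hmem m.2)]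
    · rw [DirectSum.decompose_of_mem_ne 𝒜 m.2 (Ne.symm h),
        DirectSum.decompose_of_mem_ne ℬ (hmem m.2) (Ne.symm h), map_zero]
  | add a b ha hb =>
    simp only [map_add, DirectSum.decompose_add, DirectSum.add_apply, Submodule.coe_add, ha, hb]

lemma aux_graded_lift (π : A →ₐ[k] B) (hsurj : Function.Surjective π)
    (hmem : ∀ ⦃i : ℤ⦄ ⦃a : A⦄, a ∈ 𝒜 i → π a ∈ ℬ i)
    {i : ℤ} {b : B} (hb : b ∈ ℬ i) : ∃ r, r ∈ 𝒜 i ∧ π r = b := by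
  obtain ⟨e, rfl⟩ := hsurj b
  exact ⟨(DirectSum.decompose 𝒜 e i : A), SetLike.coe_mem _,
    (aux_decompose_map 𝒜 ℬ π hmem e i).trans (DirectSum.decompose_of_mem_same ℬ hb)⟩

end aux

lemma aux_idealGen_le {k : Type} [Field k] {A B : Type} [Ring A] [Algebra k A]
    [Ring B] [Algebra k B] (S : Set A) (φ : A →ₐ[k] B) (hS : ∀ s ∈ S, φ s = 0) :
    ∀ z ∈ idealGen k S, φ z = 0 := by
  intro z hz
  have hle : idealGen k S ≤ LinearMap.ker (φ.toLinearMap) := by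
    rw [idealGen, Submodule.span_le]
    rintro _ ⟨u, v, s, hs, rfl⟩
    simp [LinearMap.mem_ker, map_mul, hS s hs]
  exact hle hz

/-- Let `I` be a DG Poisson ideal of `R` and let
`Q = R^e m_R(I) + R^e h_R(I) R^e` be the (DG) ideal of `R^e` generated by `m_R(I)` and
`h_R(I)`.  Then `R^e/Q`, with `m'(r + I) = m_R(r) + Q` and `h'(r + I) = h_R(r) + Q`,
is a universal enveloping algebra of the DG Poisson algebra `A = R/I`. -/
theorem stmt13 (k R E C A : Type) [Field k] [Ring R] [Algebra k R] [Ring E] [Algebra k E]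
    [Ring C] [Algebra k C] [Ring A] [Algebra k A]
    (n : ℕ) (𝒜 : ℤ → Submodule k R) [GradedAlgebra 𝒜]
    (ℰ : ℤ → Submodule k E) [GradedAlgebra ℰ]
    (𝒞 : ℤ → Submodule k C) [GradedAlgebra 𝒞]
    (ℬ : ℤ → Submodule k A) [GradedAlgebra ℬ]
    (P : DGPoissonAlgebra k R 𝒜)
    (x : Fin n → R) (w : Fin n → ℤ) (hx : ∀ i, x i ∈ 𝒜 (w i))
    (hgen : Algebra.adjoin k (Set.range x) = ⊤)
    -- `(R^e, m_R, h_R)`: the universal enveloping algebra of `R`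
    (DE : DGAlgebra k E ℰ) (mR : R →ₐ[k] E) (hR : R →ₗ[k] E)
    (hUEA : IsUEA k 𝒜 ℰ P DE mR hR)
    (hEgen : Algebra.adjoin k (Set.range ⇑mR ∪ Set.range ⇑hR) = ⊤)
    -- the DG Poisson ideal `I` and the quotient `A = R/I`
    (I : Submodule k R) (hI : IsDGPoissonIdeal k 𝒜 P I)
    (π' : R →ₐ[k] A) (hπ' : IsQuotientBy k π' I)
    (hπ'mem : ∀ ⦃i : ℤ⦄ ⦃a : R⦄, a ∈ 𝒜 i → π' a ∈ ℬ i)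
    (PA : DGPoissonAlgebra k A ℬ)
    (hPAd : ∀ r : R, PA.d (π' r) = π' (P.d r))
    (hPAbr : ∀ r s : R, PA.br (π' r) (π' s) = π' (P.br r s))
    -- the quotient `R^e/Q` with its induced differential
    (πQ : E →ₐ[k] C)
    (hπQ : IsQuotientBy k πQ (idealGen k (⇑mR '' (I : Set R) ∪ ⇑hR '' (I : Set R))))
    (hπQmem : ∀ ⦃i : ℤ⦄ ⦃u : E⦄, u ∈ ℰ i → πQ u ∈ 𝒞 i)
    (DC : DGAlgebra k C 𝒞) (hDC : ∀ u : E, DC.d (πQ u) = πQ (DE.d u))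
    -- the structure maps `m'` and `h'`
    (m' : A →ₐ[k] C) (hm' : ∀ r : R, m' (π' r) = πQ (mR r))
    (h' : A →ₗ[k] C) (hh' : ∀ r : R, h' (π' r) = πQ (hR r)) :
    IsUEA k ℬ 𝒞 PA DC m' h' := by
  obtain ⟨⟨⟨mR_mem, mR_d⟩, hR_mem, hR_d, hR_br, mR_br, hR_mul⟩, huniv⟩ := hUEA
  constructor
  · refine ⟨⟨?_, ?_⟩, ?_, ?_, ?_, ?_, ?_⟩
    · intro i a ha
      obtain ⟨r, hr, rfl⟩ := aux_graded_lift 𝒜 ℬ π' hπ'.surj hπ'mem ha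
      rw [hm']; exact hπQmem (mR_mem hr)
    · intro a
      obtain ⟨r, rfl⟩ := hπ'.surj a
      rw [hPAd, hm', hm', mR_d, hDC]
    · intro i a ha
      obtain ⟨r, hr, rfl⟩ := aux_graded_lift 𝒜 ℬ π' hπ'.surj hπ'mem ha
      rw [hh']; exact hπQmem (hR_mem hr)
    · intro a
      obtain ⟨r, rfl⟩ := hπ'.surj a
      rw [hPAd, hh', hh', hR_d, hDC]
    · intro i j a b ha hb
      obtain ⟨r, hr, rfl⟩ := aux_graded_lift 𝒜 ℬ π' hπ'.surj hπ'mem ha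
      obtain ⟨s, hs, rfl⟩ := aux_graded_lift 𝒜 ℬ π' hπ'.surj hπ'mem hb
      simp only [hPAbr, hh']
      rw [hR_br hr hs]
      simp only [map_sub, map_mul, map_zsmul]
    · intro i j a b ha hb
      obtain ⟨r, hr, rfl⟩ := aux_graded_lift 𝒜 ℬ π' hπ'.surj hπ'mem ha
      obtain ⟨s, hs, rfl⟩ := aux_graded_lift 𝒜 ℬ π' hπ'.surj hπ'mem hb
      simp only [hPAbr, hm', hh']
      rw [mR_br hr hs]
      simp only [map_sub, map_mul, map_zsmul]
    · intro i j a b ha hb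
      obtain ⟨r, hr, rfl⟩ := aux_graded_lift 𝒜 ℬ π' hπ'.surj hπ'mem ha
      obtain ⟨s, hs, rfl⟩ := aux_graded_lift 𝒜 ℬ π' hπ'.surj hπ'mem hb
      rw [← map_mul]
      simp only [hh', hm']
      rw [hR_mul hr hs]
      simp only [map_add, map_mul, map_zsmul]
  · intro D _ _ 𝒟 _ dD f g hcompat
    obtain ⟨⟨f_mem, f_d⟩, g_mem, g_d, g_br, f_br, g_mul⟩ := hcompat
    have hcompat' : UEACompat k 𝒜 𝒟 P dD.d (f.comp π') (g.comp π'.toLinearMap) := by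
      refine ⟨⟨fun i a ha => f_mem (hπ'mem ha), fun a => ?_⟩, fun i a ha => g_mem (hπ'mem ha),
        fun a => ?_, fun i j a b ha hb => ?_, fun i j a b ha hb => ?_,
        fun i j a b ha hb => ?_⟩
      · show f (π' (P.d a)) = dD.d (f (π' a))
        rw [← hPAd, f_d]
      · show g (π' (P.d a)) = dD.d (g (π' a))
        rw [← hPAd, g_d]
      · show g (π' (P.br a b)) = g (π' a) * g (π' b) - sgn (i * j) • (g (π' b) * g (π' a))
        rw [← hPAbr]; exact g_br (hπ'mem ha) (hπ'mem hb)
      · show f (π' (P.br a b)) = g (π' a) * f (π' b) - sgn (i * j) • (f (π' b) * g (π' a))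
        rw [← hPAbr]; exact f_br (hπ'mem ha) (hπ'mem hb)
      · show g (π' (a * b)) = f (π' a) * g (π' b) + sgn (i * j) • (f (π' b) * g (π' a))
        rw [map_mul]; exact g_mul (hπ'mem ha) (hπ'mem hb)
    obtain ⟨φ, ⟨hφDG, hφm, hφh⟩, hφuniq⟩ :=
      huniv D 𝒟 dD (f.comp π') (g.comp π'.toLinearMap) hcompat'
    have hφmR : ∀ r : R, φ (mR r) = f (π' r) := fun r => AlgHom.congr_fun hφm r
    have hφhR : ∀ r : R, φ (hR r) = g (π' r) := fun r => LinearMap.congr_fun hφh r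
    have hker : ∀ z ∈ idealGen k (⇑mR '' (I : Set R) ∪ ⇑hR '' (I : Set R)), φ z = 0 := by
      apply aux_idealGen_le
      rintro s (⟨r, hr, rfl⟩ | ⟨r, hr, rfl⟩)
      · rw [hφmR, (hπ'.ker r).2 hr, map_zero]
      · rw [hφhR, (hπ'.ker r).2 hr, map_zero]
    have hwd : ∀ e₁ e₂ : E, πQ e₁ = πQ e₂ → φ e₁ = φ e₂ := by
      intro e₁ e₂ h
      have h0 : πQ (e₁ - e₂) = 0 := by rw [map_sub, h, sub_self]
      have h1 := hker _ ((hπQ.ker _).1 h0)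
      rw [map_sub] at h1
      exact sub_eq_zero.mp h1
    have hs : ∀ c : C, πQ (Function.surjInv hπQ.surj c) = c := Function.surjInv_eq hπQ.surj
    have key : ∀ e : E, φ (Function.surjInv hπQ.surj (πQ e)) = φ e := fun e => hwd _ _ (hs _)
    let Φ : C →ₐ[k] D :=
      { toFun := fun c => φ (Function.surjInv hπQ.surj c)
        map_one' := by
          show φ (Function.surjInv hπQ.surj 1) = 1
          have : φ (Function.surjInv hπQ.surj (πQ 1)) = φ 1 := key 1
          rw [map_one πQ] at this
          rw [this, map_one]
        map_mul' := fun c₁ c₂ => by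
          show φ (Function.surjInv hπQ.surj (c₁ * c₂))
            = φ (Function.surjInv hπQ.surj c₁) * φ (Function.surjInv hπQ.surj c₂)
          have h1 : πQ (Function.surjInv hπQ.surj c₁ * Function.surjInv hπQ.surj c₂)
              = c₁ * c₂ := by rw [map_mul, hs, hs]
          have := hwd _ _ ((hs (c₁ * c₂)).trans h1.symm)
          rw [this, map_mul]
        map_zero' := by
          show φ (Function.surjInv hπQ.surj 0) = 0
          have : φ (Function.surjInv hπQ.surj (πQ 0)) = φ 0 := key 0
          rw [map_zero πQ] at this
          rw [this, map_zero]
        map_add' := fun c₁ c₂ => by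
          show φ (Function.surjInv hπQ.surj (c₁ + c₂))
            = φ (Function.surjInv hπQ.surj c₁) + φ (Function.surjInv hπQ.surj c₂)
          have h1 : πQ (Function.surjInv hπQ.surj c₁ + Function.surjInv hπQ.surj c₂)
              = c₁ + c₂ := by rw [map_add, hs, hs]
          have := hwd _ _ ((hs (c₁ + c₂)).trans h1.symm)
          rw [this, map_add]
        commutes' := fun r => by
          show φ (Function.surjInv hπQ.surj (algebraMap k C r)) = algebraMap k D r
          have h1 : πQ (algebraMap k E r) = algebraMap k C r := πQ.commutes r
          have := hwd _ _ ((hs (algebraMap k C r)).trans h1.symm)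
          rw [this, φ.commutes] }
    have hΦ : ∀ e : E, Φ (πQ e) = φ e := key
    refine ⟨Φ, ⟨⟨?_, ?_⟩, ?_, ?_⟩, ?_⟩
    · intro i c hc
      obtain ⟨e, he, rfl⟩ := aux_graded_lift ℰ 𝒞 πQ hπQ.surj hπQmem hc
      rw [hΦ]; exact hφDG.map_mem he
    · intro c
      obtain ⟨e, rfl⟩ := hπQ.surj c
      rw [hDC, hΦ, hΦ, hφDG.map_d]
    · ext a
      obtain ⟨r, rfl⟩ := hπ'.surj a
      show Φ (m' (π' r)) = f (π' r)
      rw [hm', hΦ, hφmR]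
    · ext a
      obtain ⟨r, rfl⟩ := hπ'.surj a
      show Φ (h' (π' r)) = g (π' r)
      rw [hh', hΦ, hφhR]
    · rintro ψ ⟨⟨ψmem, ψd⟩, ψm, ψh⟩
      have hψφ : ψ.comp πQ = φ := by
        apply hφuniq
        refine ⟨⟨fun i u hu => ψmem (hπQmem hu), fun u => ?_⟩, ?_, ?_⟩
        · show ψ (πQ (DE.d u)) = dD.d (ψ (πQ u))
          rw [← hDC, ψd]
        · ext r
          show ψ (πQ (mR r)) = f (π' r)
          rw [← hm']
          exact AlgHom.congr_fun ψm (π' r)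
        · ext r
          show ψ (πQ (hR r)) = g (π' r)
          rw [← hh']
          exact LinearMap.congr_fun ψh (π' r)
      ext c
      obtain ⟨e, rfl⟩ := hπQ.surj c
      rw [hΦ, ← hψφ]
      rfl
end
end

section
/- In R^e, writing y_i = h_R(x_i) and x_i for m_R(x_i), one has for every i and every n ≥ 1: h_R(x_i^n) = (k + k(-1)^{(2k-1)|x_i|^2}) y_i x_i^{2k-1} if n = 2k, and h_R(x_i^n) = (k + 1 + k(-1)^{(2k-1)|x_i|^2}) y_i x_i^{2k} if n = 2k+1, where the integer coefficients act through the unit of k. -/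
noncomputable section

open scoped DirectSum

/-- In `R^e`, writing `y_i = h_R(x_i)`, for every `i` and `n ≥ 1`:
`h_R(x_i^n) = (k + k(-1)^{(2k-1)|x_i|²}) y_i x_i^{2k-1}` if `n = 2k`, and
`h_R(x_i^n) = (k + 1 + k(-1)^{(2k-1)|x_i|²}) y_i x_i^{2k}` if `n = 2k+1`. -/
theorem stmt15 (k R E : Type) [Field k] [Ring R] [Algebra k R] [Ring E] [Algebra k E]
    (n : ℕ) (𝒜 : ℤ → Submodule k R) [GradedAlgebra 𝒜]
    (ℰ : ℤ → Submodule k E) [GradedAlgebra ℰ]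
    (P : DGPoissonAlgebra k R 𝒜)
    (x : Fin n → R) (w : Fin n → ℤ) (hx : ∀ i, x i ∈ 𝒜 (w i))
    (hgen : Algebra.adjoin k (Set.range x) = ⊤)
    (DE : DGAlgebra k E ℰ) (mR : R →ₐ[k] E) (hR : R →ₗ[k] E)
    (hUEA : IsUEA k 𝒜 ℰ P DE mR hR) :
    ∀ i : Fin n,
      (∀ m : ℕ, 1 ≤ m →
        hR (x i ^ (2 * m)) =
          ((m : k) + (m : k) * (sgn ((2 * (m : ℤ) - 1) * (w i * w i)) : k)) •
            (hR (x i) * mR (x i) ^ (2 * m - 1))) ∧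
      (∀ m : ℕ,
        hR (x i ^ (2 * m + 1)) =
          ((m : k) + 1 + (m : k) * (sgn ((2 * (m : ℤ) - 1) * (w i * w i)) : k)) •
            (hR (x i) * mR (x i) ^ (2 * m))) := by
  obtain ⟨⟨hfDG, hg_mem, hg_d, hg_br, hf_br, hg_mul⟩, -⟩ := hUEA
  intro i
  have hX : x i ∈ 𝒜 (w i) := hx i
  set X := x i with hXdef
  set w0 := w i with hw0def
  set y := hR X with hydef
  set u := mR X with hudef
  have hXp : ∀ m : ℕ, X ^ m ∈ 𝒜 ((m : ℤ) * w0) := fun m => by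
    simpa [nsmul_eq_mul] using SetLike.pow_mem_graded m hX
  set c := P.br X X with hcdef
  set e := mR c with hedef
  have sgnE : ∀ z : ℤ, Even z → sgn z = 1 := fun z hz => by
    unfold sgn; rw [Int.negOnePow_even _ hz]; simp
  have sgnO : ∀ z : ℤ, Odd z → sgn z = -1 := fun z hz => by
    unfold sgn; rw [Int.negOnePow_odd _ hz]; simp
  have hue : u * e = e * u := by
    have h2 := P.gcomm hX (P.br_mem hX hX)
    have h3 : sgn (w0 * (w0 + w0)) = 1 := sgnE _ ⟨w0 * w0, by ring⟩
    rw [h3, one_smul] at h2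
    simpa [map_mul] using congrArg mR h2
  have hrel : y * u = sgn (w0 * w0) • (u * y) + e := by
    have h := hf_br hX hX
    rw [hudef, hydef, hedef, hcdef, h]
    abel
  have hanti : e = -(sgn (w0 * w0) • e) := by
    have h := P.antisymm hX hX
    simpa [map_neg, map_zsmul] using congrArg mR h
  have hrec : ∀ m : ℕ, hR (X ^ (m + 1)) =
      u * hR (X ^ m) + sgn (w0 * ((m : ℤ) * w0)) • (u ^ m * y) := by
    intro m
    have h := hg_mul hX (hXp m)
    simpa [pow_succ', map_pow] using h
  have hueP : ∀ j : ℕ, u * (e * u ^ j) = e * u ^ (j + 1) := fun j => by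
    rw [← mul_assoc, hue, mul_assoc, ← pow_succ']
  rcases Int.even_or_odd (w0 * w0) with hev | hod
  · -- even case : sgn (w0 * w0) = 1
    have hw0e : Even w0 := by rcases Int.even_mul.mp hev with h | h <;> exact h
    have hsgn : ∀ z : ℤ, sgn (w0 * z) = 1 := fun z => sgnE _ (hw0e.mul_right z)
    have hs1 : sgn (w0 * w0) = 1 := hsgn w0
    have hee : e + e = 0 := by
      rw [hs1, one_smul] at hanti
      exact neg_eq_iff_add_eq_zero.mp hanti.symm
    have hrel1 : u * y = y * u + e := by
      rw [hs1, one_smul] at hrel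
      rw [hrel, add_assoc, hee, add_zero]
    have S : ∀ j : ℕ, u ^ (j + 1) * y = y * u ^ (j + 1) + ((j : ℤ) + 1) • (e * u ^ j) := by
      intro j; induction j with
      | zero => simpa using hrel1
      | succ j ih =>
        calc u ^ (j + 1 + 1) * y = u * (u ^ (j + 1) * y) := by rw [pow_succ', mul_assoc]
          _ = u * (y * u ^ (j + 1) + ((j : ℤ) + 1) • (e * u ^ j)) := by rw [ih]
          _ = (u * y) * u ^ (j + 1) + ((j : ℤ) + 1) • (u * (e * u ^ j)) := by
              rw [mul_add, mul_smul_comm, mul_assoc]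
          _ = (y * u + e) * u ^ (j + 1) + ((j : ℤ) + 1) • (e * u ^ (j + 1)) := by
              rw [hrel1, hueP j]
          _ = y * u ^ (j + 1 + 1) + ((↑(j + 1) : ℤ) + 1) • (e * u ^ (j + 1)) := by
              rw [add_mul, mul_assoc, ← pow_succ']
              push_cast
              module
    have T : ∀ j : ℕ, hR (X ^ (j + 1)) = ((j : ℤ) + 1) • (y * u ^ j) := by
      intro j; induction j with
      | zero => simp [← hydef]
      | succ j ih =>
        have h2 := hrec (j + 1)
        rw [ih, hsgn ((((j : ℕ) + 1 : ℕ) : ℤ) * w0), one_smul, S j] at h2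
        have h3 : u * (y * u ^ j) = y * u ^ (j + 1) + e * u ^ j := by
          rw [← mul_assoc, hrel1, add_mul, mul_assoc, ← pow_succ']
        have h4 : e * u ^ j + e * u ^ j = 0 := by rw [← add_mul, hee, zero_mul]
        rw [h2, mul_smul_comm, h3]
        calc ((j : ℤ) + 1) • (y * u ^ (j + 1) + e * u ^ j)
              + (y * u ^ (j + 1) + ((j : ℤ) + 1) • (e * u ^ j))
            = ((j : ℤ) + 2) • (y * u ^ (j + 1)) + ((j : ℤ) + 1) • (e * u ^ j + e * u ^ j) := by
              module
          _ = ((↑(j + 1) : ℤ) + 1) • (y * u ^ (j + 1)) := by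
              rw [h4, smul_zero, add_zero]; push_cast; ring_nf
    constructor
    · intro m hm
      obtain ⟨m', rfl⟩ : ∃ m', m = m' + 1 := ⟨m - 1, by omega⟩
      have h5 := T (2 * m' + 1)
      have hsg : sgn ((2 * ((m' + 1 : ℕ) : ℤ) - 1) * (w0 * w0)) = 1 :=
        sgnE _ (hev.mul_left _)
      have hexp : 2 * (m' + 1) = (2 * m' + 1) + 1 := by ring
      have hexp2 : 2 * (m' + 1) - 1 = 2 * m' + 1 := by omega
      rw [hexp2, hexp, h5, hsg]
      have hco : (((m' + 1 : ℕ) : k) + ((m' + 1 : ℕ) : k) * ((1 : ℤ) : k))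
          = (((2 * m' + 1 : ℕ) : ℤ) + 1 : ℤ) := by push_cast; ring
      rw [hco, Int.cast_smul_eq_zsmul]
    · intro m
      have h5 := T (2 * m)
      have hsg : sgn ((2 * ((m : ℕ) : ℤ) - 1) * (w0 * w0)) = 1 :=
        sgnE _ (hev.mul_left _)
      rw [show 2 * m + 1 = 2 * m + 1 from rfl, h5, hsg]
      have hco : (((m : ℕ) : k) + 1 + ((m : ℕ) : k) * ((1 : ℤ) : k))
          = (((2 * m : ℕ) : ℤ) + 1 : ℤ) := by push_cast; ring
      rw [hco, Int.cast_smul_eq_zsmul]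
  · -- odd case : sgn (w0 * w0) = -1
    have hs1 : sgn (w0 * w0) = -1 := sgnO _ hod
    have hsgn_even : ∀ m : ℕ, Even m → sgn (w0 * ((m : ℤ) * w0)) = 1 := by
      intro m hm
      obtain ⟨r, hr⟩ := hm
      exact sgnE _ ⟨w0 * (r : ℤ) * w0, by push_cast [hr]; ring⟩
    have hsgn_odd : ∀ m : ℕ, Odd m → sgn (w0 * ((m : ℤ) * w0)) = -1 := by
      intro m hm
      obtain ⟨r, hr⟩ := hm
      have h1 : Odd ((m : ℤ)) := ⟨(r : ℤ), by push_cast [hr]; ring⟩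
      have h2 : Odd (w0 * ((m : ℤ) * w0)) := by
        have := h1.mul hod
        rwa [show (m : ℤ) * (w0 * w0) = w0 * ((m : ℤ) * w0) by ring] at this
      exact sgnO _ h2
    have hrel1 : u * y = -(y * u) + e := by
      rw [hs1, neg_one_zsmul] at hrel
      rw [hrel]; abel
    have S : ∀ j : ℕ, u ^ (2 * j) * y = y * u ^ (2 * j) ∧
        u ^ (2 * j + 1) * y = -(y * u ^ (2 * j + 1)) + e * u ^ (2 * j) := by
      intro j; induction j with
      | zero =>
        constructor
        · simp
        · simpa using hrel1
      | succ j ih =>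
        have hA : u ^ (2 * (j + 1)) * y = y * u ^ (2 * (j + 1)) := by
          calc u ^ (2 * (j + 1)) * y = u * (u ^ (2 * j + 1) * y) := by
                rw [show 2 * (j + 1) = (2 * j + 1) + 1 by ring, pow_succ', mul_assoc]
            _ = u * (-(y * u ^ (2 * j + 1)) + e * u ^ (2 * j)) := by rw [ih.2]
            _ = -((u * y) * u ^ (2 * j + 1)) + e * u ^ (2 * j + 1) := by
                rw [mul_add, mul_neg, ← mul_assoc, hueP]
            _ = -((-(y * u) + e) * u ^ (2 * j + 1)) + e * u ^ (2 * j + 1) := by rw [hrel1]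
            _ = y * u ^ (2 * (j + 1)) := by
                rw [add_mul, neg_mul, mul_assoc, ← pow_succ',
                  show (2 * j + 1) + 1 = 2 * (j + 1) by ring]
                abel
        refine ⟨hA, ?_⟩
        calc u ^ (2 * (j + 1) + 1) * y = u * (u ^ (2 * (j + 1)) * y) := by
              rw [pow_succ', mul_assoc]
          _ = (u * y) * u ^ (2 * (j + 1)) := by rw [hA, ← mul_assoc]
          _ = (-(y * u) + e) * u ^ (2 * (j + 1)) := by rw [hrel1]
          _ = -(y * u ^ (2 * (j + 1) + 1)) + e * u ^ (2 * (j + 1)) := by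
              rw [add_mul, neg_mul, mul_assoc, ← pow_succ']
    have T : ∀ j : ℕ, hR (X ^ (2 * j + 1)) = y * u ^ (2 * j) ∧ hR (X ^ (2 * j + 2)) = 0 := by
      intro j; induction j with
      | zero =>
        constructor
        · simp [← hydef]
        · have h2 := hrec 1
          rw [hsgn_odd 1 odd_one] at h2
          simpa [neg_one_zsmul, ← hydef] using h2
      | succ j ih =>
        have hA : hR (X ^ (2 * (j + 1) + 1)) = y * u ^ (2 * (j + 1)) := by
          have h2 := hrec (2 * j + 2)
          rw [ih.2, hsgn_even (2 * j + 2) ⟨j + 1, by ring⟩, one_smul, mul_zero, zero_add] at h2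
          rw [show 2 * (j + 1) + 1 = (2 * j + 2) + 1 by ring, h2,
            show 2 * j + 2 = 2 * (j + 1) by ring, (S (j + 1)).1]
        refine ⟨hA, ?_⟩
        have h2 := hrec (2 * j + 3)
        rw [show (2 * j + 3) = 2 * (j + 1) + 1 by ring] at h2
        rw [show (2 * (j + 1) + 1) + 1 = 2 * (j + 1) + 2 by ring] at h2
        rw [hA, hsgn_odd (2 * (j + 1) + 1) ⟨j + 1, by ring⟩, neg_one_zsmul, (S (j + 1)).2] at h2
        rw [show 2 * (j + 1) + 2 = 2 * (j + 1) + 2 from rfl, h2]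
        have h3 : u * (y * u ^ (2 * (j + 1))) = -(y * u ^ (2 * (j + 1) + 1)) + e * u ^ (2 * (j + 1)) := by
          rw [← mul_assoc, hrel1, add_mul, neg_mul, mul_assoc, ← pow_succ']
        rw [h3]; abel
    constructor
    · intro m hm
      obtain ⟨m', rfl⟩ : ∃ m', m = m' + 1 := ⟨m - 1, by omega⟩
      have hsg : sgn ((2 * ((m' + 1 : ℕ) : ℤ) - 1) * (w0 * w0)) = -1 := by
        have h1 : Odd (2 * ((m' + 1 : ℕ) : ℤ) - 1) := ⟨((m' + 1 : ℕ) : ℤ) - 1, by ring⟩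
        exact sgnO _ (h1.mul hod)
      have h0 := (T m').2
      rw [show 2 * (m' + 1) = 2 * m' + 2 by ring, h0, hsg]
      have hco : (((m' + 1 : ℕ) : k) + ((m' + 1 : ℕ) : k) * ((-1 : ℤ) : k)) = 0 := by
        push_cast; ring
      rw [hco, zero_smul]
    · intro m
      have hsg : sgn ((2 * ((m : ℕ) : ℤ) - 1) * (w0 * w0)) = -1 := by
        have h1 : Odd (2 * ((m : ℕ) : ℤ) - 1) := ⟨((m : ℕ) : ℤ) - 1, by ring⟩
        exact sgnO _ (h1.mul hod)
      rw [(T m).1, hsg]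
      have hco : (((m : ℕ) : k) + 1 + ((m : ℕ) : k) * ((-1 : ℤ) : k)) = 1 := by
        push_cast; ring
      rw [hco, one_smul]
end
end
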